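/- Let Q be a finite abelian group of m×m unitary complex matrices, let φ ∈ ℂ^m, and suppose the geometrically uniform frame vectors φ_U = Uφ (U ∈ Q) span ℂ^m. Let S = Σ_{U ∈ Q} φ_U φ_U* be the (positive definite) frame operator and let μ_U = S^{-1/2}φ_U be the canonical tight frame vectors. Then for every family {m_U}_{U ∈ Q} of vectors in ℂ^m forming a normalized tight frame, i.e. Σ_{U ∈ Q} m_U m_U* = I, one has Σ_{U ∈ Q} |⟨φ_U, m_U⟩|² ≤ Σ_{U ∈ Q} |⟨φ_U, μ_U⟩|². That is, among all normalized tight frames, the canonical tight frame maximizes the total squared correlation with the original GU frame vectors. -/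

import Mathlib

open Matrix
open scoped ComplexOrder

section Aux

variable {k : ℕ}

private lemma aux_dot (M N : Matrix (Fin k) (Fin k) ℂ) (x y : Fin k → ℂ) :
    star (M *ᵥ x) ⬝ᵥ (N *ᵥ y) = star x ⬝ᵥ ((Mᴴ * N) *ᵥ y) := by
  rw [star_mulVec, dotProduct_mulVec, dotProduct_mulVec, vecMul_vecMul]

private lemma aux_trace (M : Matrix (Fin k) (Fin k) ℂ) (y : Fin k → ℂ) :
    (M * vecMulVec y (star y)).trace = star y ⬝ᵥ (M *ᵥ y) := by
  simp only [trace, diag, Matrix.mul_apply, vecMulVec_apply, dotProduct, mulVec,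
    Pi.star_apply, Finset.mul_sum, Finset.sum_mul]
  congr 1; ext i; congr 1; ext j; ring

private lemma aux_conj (A : Matrix (Fin k) (Fin k) ℂ) (x : Fin k → ℂ) :
    A * vecMulVec x (star x) * Aᴴ = vecMulVec (A *ᵥ x) (star (A *ᵥ x)) := by
  ext i j
  simp only [Matrix.mul_apply, vecMulVec_apply, conjTranspose_apply, mulVec, dotProduct,
    Pi.star_apply, star_sum, star_mul', Finset.mul_sum, Finset.sum_mul]
  congr 1; ext l; congr 1; ext p; ring

private lemma aux_cs (a b : Fin k → ℂ) :
    ‖star a ⬝ᵥ b‖ ^ 2 ≤ (star a ⬝ᵥ a).re * (star b ⬝ᵥ b).re := by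
  let a' : EuclideanSpace ℂ (Fin k) := WithLp.toLp 2 a
  let b' : EuclideanSpace ℂ (Fin k) := WithLp.toLp 2 b
  have h1 : inner (𝕜 := ℂ) a' b' = star a ⬝ᵥ b := by
    show b ⬝ᵥ star a = _; exact dotProduct_comm _ _
  have h2 : (star a ⬝ᵥ a).re = ‖a'‖ ^ 2 := by
    have := @inner_self_eq_norm_sq ℂ _ _ _ _ a'
    rw [← this, show inner ℂ a' a' = a ⬝ᵥ star a from rfl, dotProduct_comm]; rfl
  have h3 : (star b ⬝ᵥ b).re = ‖b'‖ ^ 2 := by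
    have := @inner_self_eq_norm_sq ℂ _ _ _ _ b'
    rw [← this, show inner ℂ b' b' = b ⬝ᵥ star b from rfl, dotProduct_comm]; rfl
  calc ‖star a ⬝ᵥ b‖ ^ 2 = ‖inner (𝕜 := ℂ) a' b'‖ ^ 2 := by rw [h1]
    _ ≤ (‖a'‖ * ‖b'‖) ^ 2 :=
        pow_le_pow_left₀ (norm_nonneg _) (norm_inner_le_norm (𝕜 := ℂ) a' b') 2
    _ = (star a ⬝ᵥ a).re * (star b ⬝ᵥ b).re := by rw [h2, h3]; ring

end Aux

theorem stmt_8 {m : ℕ} (hm : 0 < m)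
    (Q : Subgroup (Matrix.unitaryGroup (Fin m) ℂ)) [Fintype Q]
    (habelian : ∀ U V : Q, U * V = V * U)
    (φ : Fin m → ℂ)
    (hspan : Submodule.span ℂ
      (Set.range fun U : Q => (U : Matrix (Fin m) (Fin m) ℂ) *ᵥ φ) = ⊤)
    (S : Matrix (Fin m) (Fin m) ℂ)
    (hS : S = ∑ U : Q, vecMulVec ((U : Matrix (Fin m) (Fin m) ℂ) *ᵥ φ)
          (star ((U : Matrix (Fin m) (Fin m) ℂ) *ᵥ φ)))
    (T : Matrix (Fin m) (Fin m) ℂ)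
    (hT : T.PosDef)
    (hTsq : T * T = S)
    (μ : Q → Fin m → ℂ)
    (hμ : ∀ U : Q, μ U = T⁻¹ *ᵥ ((U : Matrix (Fin m) (Fin m) ℂ) *ᵥ φ))
    (v : Q → Fin m → ℂ)
    (hv : ∑ U : Q, vecMulVec (v U) (star (v U)) = (1 : Matrix (Fin m) (Fin m) ℂ)) :
    ∑ U : Q, ‖star ((U : Matrix (Fin m) (Fin m) ℂ) *ᵥ φ) ⬝ᵥ v U‖ ^ 2 ≤
      ∑ U : Q, ‖star ((U : Matrix (Fin m) (Fin m) ℂ) *ᵥ φ) ⬝ᵥ μ U‖ ^ 2 := by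
  classical
  set f : Q → Fin m → ℂ := fun U => (U : Matrix (Fin m) (Fin m) ℂ) *ᵥ φ with hf
  -- unitarity facts
  have hstar : ∀ U : Q, ((U : Matrix (Fin m) (Fin m) ℂ))ᴴ * (U : Matrix (Fin m) (Fin m) ℂ) = 1 := by
    intro U
    have := (U : Matrix.unitaryGroup (Fin m) ℂ).2.1
    rwa [Matrix.star_eq_conjTranspose] at this
  have hstar2 : ∀ U : Q, (U : Matrix (Fin m) (Fin m) ℂ) * ((U : Matrix (Fin m) (Fin m) ℂ))ᴴ = 1 := by
    intro U
    have := (U : Matrix.unitaryGroup (Fin m) ℂ).2.2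
    rwa [Matrix.star_eq_conjTranspose] at this
  -- S is Q-invariant
  have hSinv : ∀ U : Q, (U : Matrix (Fin m) (Fin m) ℂ) * S * ((U : Matrix (Fin m) (Fin m) ℂ))ᴴ = S := by
    intro U
    rw [hS, Finset.mul_sum, Finset.sum_mul]
    refine Fintype.sum_equiv (Equiv.mulLeft U) _ _ (fun V => ?_)
    rw [aux_conj, mulVec_mulVec]
    simp [Equiv.coe_mulLeft]
  -- T is Q-invariant (uniqueness of the PSD square root)
  have hTinv : ∀ U : Q, (U : Matrix (Fin m) (Fin m) ℂ) * T * ((U : Matrix (Fin m) (Fin m) ℂ))ᴴ = T := by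
    intro U
    set A := (U : Matrix (Fin m) (Fin m) ℂ)
    have hW : (A * T * Aᴴ).PosSemidef := hT.posSemidef.mul_mul_conjTranspose_same _
    open scoped MatrixOrder in
    refine (CFC.sqrt_sq (A * T * Aᴴ) hW.nonneg).symm.trans
      ((congrArg CFC.sqrt ?_).trans (CFC.sqrt_sq T hT.posSemidef.nonneg))
    have e1 : (A * T * Aᴴ) ^ 2 = A * (T * T) * Aᴴ := by
      rw [pow_two]
      calc (A * T * Aᴴ) * (A * T * Aᴴ)
          = A * T * (Aᴴ * A) * (T * Aᴴ) := by simp only [Matrix.mul_assoc]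
        _ = A * (T * T) * Aᴴ := by rw [hstar U]; simp only [Matrix.mul_one, Matrix.mul_assoc]
    rw [e1, pow_two, hTsq, hSinv U]
  have hTinv' : ∀ U : Q, ((U : Matrix (Fin m) (Fin m) ℂ))ᴴ * T * (U : Matrix (Fin m) (Fin m) ℂ) = T := by
    intro U
    have h := hTinv U⁻¹
    simpa [Matrix.star_eq_conjTranspose, conjTranspose_conjTranspose] using h
  -- T⁻¹ commutes with the group in the same way
  have hTdet : IsUnit T.det := (Matrix.isUnit_iff_isUnit_det T).mp hT.isUnit
  have hTiT : T⁻¹ * T = 1 := Matrix.nonsing_inv_mul T hTdet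
  have hTTi : T * T⁻¹ = 1 := Matrix.mul_nonsing_inv T hTdet
  have hTinvInv : ∀ U : Q, ((U : Matrix (Fin m) (Fin m) ℂ))ᴴ * T⁻¹ * (U : Matrix (Fin m) (Fin m) ℂ) = T⁻¹ := by
    intro U
    set A := (U : Matrix (Fin m) (Fin m) ℂ)
    have hUinv : A⁻¹ = Aᴴ := Matrix.inv_eq_left_inv (hstar U)
    have hUHinv : (Aᴴ)⁻¹ = A := Matrix.inv_eq_left_inv (hstar2 U)
    calc Aᴴ * T⁻¹ * A = Aᴴ * (T⁻¹ * A) := by rw [Matrix.mul_assoc]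
      _ = (Aᴴ * T * A)⁻¹ := by
          rw [Matrix.mul_inv_rev, Matrix.mul_inv_rev, hUinv, hUHinv]
      _ = T⁻¹ := by rw [hTinv' U]
  -- the constant correlation
  set cC : ℂ := star φ ⬝ᵥ (T⁻¹ *ᵥ φ) with hcC
  have hc : ∀ U : Q, star (f U) ⬝ᵥ (T⁻¹ *ᵥ f U) = cC := by
    intro U
    rw [hf]
    simp only
    rw [mulVec_mulVec, aux_dot, ← Matrix.mul_assoc, hTinvInv U]
  have hcpos : 0 ≤ cC := (hT.posSemidef.inv).dotProduct_mulVec_nonneg φ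
  obtain ⟨hre, him⟩ := Complex.nonneg_iff.mp hcpos
  set c : ℝ := cC.re with hcdef
  have hnormc : ‖cC‖ ^ 2 = c * c := by
    rw [Complex.sq_norm, Complex.normSq_apply, ← him]
    ring
  -- square root of T
  open scoped MatrixOrder in
  set R : Matrix (Fin m) (Fin m) ℂ := CFC.sqrt T with hR
  open scoped MatrixOrder in
  have hRR : R * R = T := CFC.sqrt_mul_sqrt_self T hT.posSemidef.nonneg
  open scoped MatrixOrder in
  have hRH : Rᴴ = R := (CFC.sqrt_nonneg T).posSemidef.isHermitian
  have hTiH : (T⁻¹)ᴴ = T⁻¹ := hT.isHermitian.inv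
  have key : ∀ x y : Fin m → ℂ, star (R *ᵥ x) ⬝ᵥ (R *ᵥ y) = star x ⬝ᵥ (T *ᵥ y) := by
    intro x y
    rw [aux_dot, hRH, hRR]
  -- per-term Cauchy–Schwarz bound
  have hterm : ∀ U : Q, ‖star (f U) ⬝ᵥ v U‖ ^ 2 ≤ c * (star (v U) ⬝ᵥ (T *ᵥ v U)).re := by
    intro U
    have h1 : star (R *ᵥ (T⁻¹ *ᵥ f U)) ⬝ᵥ (R *ᵥ v U) = star (f U) ⬝ᵥ v U := by
      rw [key, aux_dot T⁻¹ T (f U) (v U), hTiH, hTiT, Matrix.one_mulVec]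
    have h2 : star (R *ᵥ (T⁻¹ *ᵥ f U)) ⬝ᵥ (R *ᵥ (T⁻¹ *ᵥ f U)) = cC := by
      rw [key, aux_dot T⁻¹ T (f U) (T⁻¹ *ᵥ f U), hTiH, hTiT, Matrix.one_mulVec, hc U]
    have h3 : star (R *ᵥ v U) ⬝ᵥ (R *ᵥ v U) = star (v U) ⬝ᵥ (T *ᵥ v U) := key _ _
    have := aux_cs (R *ᵥ (T⁻¹ *ᵥ f U)) (R *ᵥ v U)
    rwa [h1, h2, h3] at this
  -- trace identities
  have htr1 : ∑ U : Q, star (v U) ⬝ᵥ (T *ᵥ v U) = T.trace := by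
    calc ∑ U : Q, star (v U) ⬝ᵥ (T *ᵥ v U)
        = ∑ U : Q, (T * vecMulVec (v U) (star (v U))).trace := by
          simp_rw [aux_trace]
      _ = (T * ∑ U : Q, vecMulVec (v U) (star (v U))).trace := by
          rw [Finset.mul_sum, trace_sum]
      _ = T.trace := by rw [hv, Matrix.mul_one]
  have htr2 : T.trace = ∑ _U : Q, cC := by
    have hTS : T⁻¹ * S = T := by rw [← hTsq, ← Matrix.mul_assoc, hTiT, Matrix.one_mul]
    calc T.trace = (T⁻¹ * S).trace := by rw [hTS]
      _ = ∑ U : Q, (T⁻¹ * vecMulVec (f U) (star (f U))).trace := by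
          rw [hS, Finset.mul_sum, trace_sum]
      _ = ∑ U : Q, star (f U) ⬝ᵥ (T⁻¹ *ᵥ f U) := by simp_rw [aux_trace]
      _ = ∑ _U : Q, cC := by simp_rw [hc]
  -- assemble
  have hRHS : ∀ U : Q, ‖star (f U) ⬝ᵥ μ U‖ ^ 2 = c * c := by
    intro U
    rw [hμ U, hc U, hnormc]
  calc ∑ U : Q, ‖star (f U) ⬝ᵥ v U‖ ^ 2
      ≤ ∑ U : Q, c * (star (v U) ⬝ᵥ (T *ᵥ v U)).re := Finset.sum_le_sum (fun U _ => hterm U)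
    _ = c * (∑ U : Q, star (v U) ⬝ᵥ (T *ᵥ v U)).re := by
        rw [Complex.re_sum, Finset.mul_sum]
    _ = c * (∑ _U : Q, cC).re := by rw [htr1, htr2]
    _ = ∑ _U : Q, c * c := by rw [Complex.re_sum, Finset.mul_sum]
    _ = ∑ U : Q, ‖star (f U) ⬝ᵥ μ U‖ ^ 2 := by simp_rw [hRHS]
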